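/- For every n ≥ 1 there exists a polynomial map f : ℝ^n → ℝ^n such that f(B̄_n) = [−1,1]^n, the n-dimensional hypercube. -/

import Mathlib

open Real Set

/-- A map between Euclidean spaces is a *polynomial map* if each of its components
is given by the evaluation of a real multivariate polynomial. -/
def IsPolynomialMap {σ τ : Type} (f : EuclideanSpace ℝ σ → EuclideanSpace ℝ τ) : Prop :=
  ∃ p : τ → MvPolynomial σ ℝ, ∀ x i, f x i = MvPolynomial.eval (fun j => x j) (p i)

/-- The doubling polynomial map. -/
noncomputable def qdbl (t : ℝ) : ℝ := 2 * t ^ 2 - 1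

lemma qdbl_iter_cos (k : ℕ) : ∀ θ : ℝ, qdbl^[k] (Real.cos θ) = Real.cos (2 ^ k * θ) := by
  induction k with
  | zero => intro θ; simp
  | succ k ih =>
    intro θ
    rw [Function.iterate_succ_apply]
    have h1 : qdbl (Real.cos θ) = Real.cos (2 * θ) := by
      rw [Real.cos_two_mul]; simp [qdbl]
    rw [h1, ih (2 * θ)]
    ring_nf

/-- the univariate polynomial whose eval is qdbl^[k] -/
noncomputable def Pq : ℕ → Polynomial ℝ
  | 0 => Polynomial.X
  | k + 1 => (2 * Polynomial.X ^ 2 - 1 : Polynomial ℝ).comp (Pq k)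

lemma Pq_eval (k : ℕ) (t : ℝ) : (Pq k).eval t = qdbl^[k] t := by
  induction k with
  | zero => simp [Pq]
  | succ k ih =>
    rw [Function.iterate_succ_apply', Pq, Polynomial.eval_comp, ih]
    simp [qdbl]

/-- 1D surjectivity core: the interval `[π/2 - δ, π/2 + δ]` maps under `cos (2^k ·)`
onto `[-1,1]` provided `2^k · 2δ ≥ 2π`. -/
lemma exists_theta (k : ℕ) (δ : ℝ) (hδ : 0 < δ)
    (hk : 2 * π ≤ 2 ^ k * (2 * δ)) (y : ℝ) (hy : y ∈ Icc (-1 : ℝ) 1) :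
    ∃ θ ∈ Icc (π / 2 - δ) (π / 2 + δ), Real.cos (2 ^ k * θ) = y := by
  have h2k : (0 : ℝ) < 2 ^ k := by positivity
  have hπ : (0 : ℝ) < π := Real.pi_pos
  set A : ℝ := 2 ^ k * (π / 2 - δ) with hA
  set B : ℝ := 2 ^ k * (π / 2 + δ) with hB
  have hAB : A + 2 * π ≤ B := by
    have : B - A = 2 ^ k * (2 * δ) := by rw [hA, hB]; ring
    linarith
  -- a point where cos = 1
  have h2π : (0 : ℝ) < 2 * π := by linarith
  obtain ⟨a, hcos_a, haA, haB⟩ :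
      ∃ a : ℝ, Real.cos a = 1 ∧ A ≤ a ∧ a ≤ B := by
    refine ⟨(⌈A / (2 * π)⌉ : ℤ) * (2 * π), Real.cos_int_mul_two_pi _, ?_, ?_⟩
    · have h := Int.le_ceil (A / (2 * π))
      have := mul_le_mul_of_nonneg_right h (le_of_lt h2π)
      rw [div_mul_cancel₀ _ (ne_of_gt h2π)] at this
      exact this
    · have h := Int.ceil_lt_add_one (A / (2 * π))
      have h1 := mul_lt_mul_of_pos_right h h2π
      rw [add_mul, div_mul_cancel₀ _ (ne_of_gt h2π), one_mul] at h1
      linarith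
  obtain ⟨b, hcos_b, hbA, hbB⟩ :
      ∃ b : ℝ, Real.cos b = -1 ∧ A ≤ b ∧ b ≤ B := by
    refine ⟨(⌈(A - π) / (2 * π)⌉ : ℤ) * (2 * π) + π, Real.cos_int_mul_two_pi_add_pi _, ?_, ?_⟩
    · have h := Int.le_ceil ((A - π) / (2 * π))
      have := mul_le_mul_of_nonneg_right h (le_of_lt h2π)
      rw [div_mul_cancel₀ _ (ne_of_gt h2π)] at this
      linarith
    · have h := Int.ceil_lt_add_one ((A - π) / (2 * π))
      have h1 := mul_lt_mul_of_pos_right h h2π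
      rw [add_mul, div_mul_cancel₀ _ (ne_of_gt h2π), one_mul] at h1
      linarith
  -- pull back by dividing by 2^k
  set θ₁ : ℝ := a / 2 ^ k with hθ₁
  set θ₂ : ℝ := b / 2 ^ k with hθ₂
  have hIcc : ∀ c : ℝ, A ≤ c → c ≤ B → c / 2 ^ k ∈ Icc (π / 2 - δ) (π / 2 + δ) := by
    intro c h1 h2
    constructor
    · rw [le_div_iff₀ h2k]; rw [hA] at h1; linarith [h1]
    · rw [div_le_iff₀ h2k]; rw [hB] at h2; linarith [h2]
  have hθ₁I : θ₁ ∈ Icc (π / 2 - δ) (π / 2 + δ) := hIcc a haA haB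
  have hθ₂I : θ₂ ∈ Icc (π / 2 - δ) (π / 2 + δ) := hIcc b hbA hbB
  have hcont : ContinuousOn (fun u : ℝ => Real.cos (2 ^ k * u)) (uIcc θ₂ θ₁) := by
    fun_prop
  have himg := intermediate_value_uIcc hcont
  have he1 : (2 : ℝ) ^ k * θ₁ = a := by rw [hθ₁]; field_simp
  have he2 : (2 : ℝ) ^ k * θ₂ = b := by rw [hθ₂]; field_simp
  have hy' : y ∈ uIcc (Real.cos (2 ^ k * θ₂)) (Real.cos (2 ^ k * θ₁)) := by
    rw [he1, he2, hcos_a, hcos_b]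
    rw [Set.uIcc_of_le (by norm_num : (-1 : ℝ) ≤ 1)]
    exact hy
  obtain ⟨θ, hθmem, hθeq⟩ := himg hy'
  refine ⟨θ, ?_, hθeq⟩
  have : uIcc θ₂ θ₁ ⊆ Icc (π / 2 - δ) (π / 2 + δ) :=
    (Set.ordConnected_Icc).uIcc_subset hθ₂I hθ₁I
  exact this hθmem

/-- `|cos θ| ≤ sin δ` on `[π/2 - δ, π/2 + δ]` for `0 < δ ≤ π/2`. -/
lemma abs_cos_le (δ θ : ℝ) (hδ : 0 < δ) (hδ2 : δ ≤ π / 2)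
    (hθ : θ ∈ Icc (π / 2 - δ) (π / 2 + δ)) : |Real.cos θ| ≤ Real.sin δ := by
  have h : Real.cos θ = Real.sin (π / 2 - θ) := (Real.sin_pi_div_two_sub θ).symm
  have hu1 : -δ ≤ π / 2 - θ := by linarith [hθ.2]
  have hu2 : π / 2 - θ ≤ δ := by linarith [hθ.1]
  have hmono := Real.strictMonoOn_sin.monotoneOn
  have hδI : δ ∈ Icc (-(π / 2)) (π / 2) := ⟨by linarith, hδ2⟩
  have hnδI : -δ ∈ Icc (-(π / 2)) (π / 2) := ⟨by linarith, by linarith⟩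
  have huI : π / 2 - θ ∈ Icc (-(π / 2)) (π / 2) := ⟨by linarith, by linarith⟩
  have h1 : Real.sin (π / 2 - θ) ≤ Real.sin δ := hmono huI hδI hu2
  have h2 : Real.sin (-δ) ≤ Real.sin (π / 2 - θ) := hmono hnδI huI hu1
  rw [Real.sin_neg] at h2
  rw [h]
  exact abs_le.mpr ⟨by linarith, h1⟩

lemma eval_aux {n : ℕ} (v : Fin n → ℝ) (q : Polynomial ℝ) (i : Fin n) :
    MvPolynomial.eval v (Polynomial.aeval (MvPolynomial.X i) q) = q.eval (v i) := by
  have h := Polynomial.aeval_algHom_apply (MvPolynomial.aeval v) (MvPolynomial.X i) q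
  simp only [MvPolynomial.aeval_X] at h
  have h2 : (MvPolynomial.aeval v : MvPolynomial (Fin n) ℝ →ₐ[ℝ] ℝ)
      ((Polynomial.aeval (MvPolynomial.X i)) q)
      = MvPolynomial.eval v ((Polynomial.aeval (MvPolynomial.X i)) q) := rfl
  have h3 : (Polynomial.aeval (v i)) q = Polynomial.eval (v i) q := rfl
  rw [← h2, ← h, h3]

lemma qdbl_iter_mem_Icc (k : ℕ) (t : ℝ) (ht : t ∈ Icc (-1 : ℝ) 1) :
    qdbl^[k] t ∈ Icc (-1 : ℝ) 1 := by
  have h : t = Real.cos (Real.arccos t) := (Real.cos_arccos ht.1 ht.2).symm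
  rw [h, qdbl_iter_cos]
  exact ⟨Real.neg_one_le_cos _, Real.cos_le_one _⟩

/-- The hypercube `[−1,1]ⁿ` is the image of the closed unit ball `B̄ₙ` under a
polynomial map `ℝⁿ → ℝⁿ`. -/
theorem hypercube_is_poly_image_ball (n : ℕ) (hn : 1 ≤ n) :
    ∃ f : EuclideanSpace ℝ (Fin n) → EuclideanSpace ℝ (Fin n),
      IsPolynomialMap f ∧
      f '' Metric.closedBall 0 1 =
        {x : EuclideanSpace ℝ (Fin n) | ∀ i, x i ∈ Set.Icc (-1 : ℝ) 1} := by
  have hπ : (0 : ℝ) < π := Real.pi_pos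
  have hn1 : (1 : ℝ) ≤ n := by exact_mod_cast hn
  have hnpos : (0 : ℝ) < n := by linarith
  set δ : ℝ := (n : ℝ)⁻¹ with hδdef
  have hδ : 0 < δ := by positivity
  have hδ1 : δ ≤ 1 := by
    rw [hδdef]
    exact inv_le_one_of_one_le₀ hn1
  have hδ2 : δ ≤ π / 2 := by
    have := Real.pi_gt_three
    linarith
  obtain ⟨k, hk⟩ := pow_unbounded_of_one_lt (π / δ) (one_lt_two (α := ℝ))
  have hkδ : 2 * π ≤ 2 ^ k * (2 * δ) := by
    rw [div_lt_iff₀ hδ] at hk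
    nlinarith
  refine ⟨fun x => WithLp.toLp 2 (fun i => qdbl^[k] (x i)), ?_, ?_⟩
  · refine ⟨fun i => Polynomial.aeval (MvPolynomial.X i) (Pq k), fun x i => ?_⟩
    rw [eval_aux]
    exact (Pq_eval k (x i)).symm
  · ext y
    simp only [Set.mem_image, Set.mem_setOf_eq]
    constructor
    · rintro ⟨x, hx, rfl⟩ i
      rw [mem_closedBall_zero_iff] at hx
      have hxi : |x i| ≤ 1 := by
        have hnorm := EuclideanSpace.norm_eq x
        have hterm : ‖x i‖ ^ 2 ≤ ∑ j, ‖x j‖ ^ 2 :=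
          Finset.single_le_sum (f := fun j => ‖x j‖ ^ 2)
            (fun j _ => sq_nonneg _) (Finset.mem_univ i)
        have h1 : |x i| ≤ ‖x‖ := by
          rw [hnorm]
          calc |x i| = Real.sqrt (‖x i‖ ^ 2) := by
                rw [Real.sqrt_sq_eq_abs]; simp
          _ ≤ _ := Real.sqrt_le_sqrt hterm
        linarith
      exact qdbl_iter_mem_Icc k _ (abs_le.mp hxi |>.symm.imp id id |> fun h => ⟨h.2, h.1⟩)
    · intro hy
      have hex : ∀ i, ∃ θ ∈ Icc (π / 2 - δ) (π / 2 + δ), Real.cos (2 ^ k * θ) = y i :=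
        fun i => exists_theta k δ hδ hkδ (y i) (hy i)
      choose θ hθI hθeq using hex
      refine ⟨(WithLp.toLp 2 (fun i => Real.cos (θ i)) : EuclideanSpace ℝ (Fin n)), ?_, ?_⟩
      · rw [mem_closedBall_zero_iff, EuclideanSpace.norm_eq, Real.sqrt_le_one]
        have hbound : ∀ i, ‖Real.cos (θ i)‖ ^ 2 ≤ δ ^ 2 := by
          intro i
          have h1 : |Real.cos (θ i)| ≤ Real.sin δ := abs_cos_le δ (θ i) hδ hδ2 (hθI i)
          have h2 : Real.sin δ ≤ δ := le_of_lt (Real.sin_lt hδ)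
          have h3 : |Real.cos (θ i)| ≤ δ := le_trans h1 h2
          obtain ⟨ha, hb⟩ := abs_le.mp h3
          calc ‖Real.cos (θ i)‖ ^ 2 = Real.cos (θ i) ^ 2 := by
                rw [Real.norm_eq_abs, sq_abs]
          _ ≤ δ ^ 2 := sq_le_sq' ha hb
        calc ∑ i, ‖(WithLp.toLp 2 (fun i => Real.cos (θ i)) : EuclideanSpace ℝ (Fin n)) i‖ ^ 2
            ≤ ∑ _i : Fin n, δ ^ 2 := Finset.sum_le_sum (fun i _ => hbound i)
        _ = n * δ ^ 2 := by rw [Finset.sum_const]; simp [mul_comm]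
        _ = n * ((n : ℝ)⁻¹ * (n : ℝ)⁻¹) := by rw [hδdef]; ring
        _ ≤ 1 := by
            rw [← mul_assoc, mul_inv_cancel₀ (ne_of_gt hnpos)]
            rw [one_mul]
            exact inv_le_one_of_one_le₀ hn1
      · ext i
        show qdbl^[k] (Real.cos (θ i)) = y i
        rw [qdbl_iter_cos, hθeq]
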